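/- arXiv:1308.6023 — 4 statements merged into one kernel-verified Lean document; each statement's English description precedes it below -/
import Mathlib

section
/- Let L be a Lie algebra over ℂ with countable basis and V a simple L-module. For any finite linearly independent set {v₁,...,vₙ} ⊂ V and any elements v₁',...,vₙ' ∈ V, there exists u ∈ U(L) such that u·vᵢ = vᵢ' for all i = 1,...,n. -/
open Cardinal Polynomial

section Density

variable {A V : Type} [Ring A] [Algebra ℂ A] [AddCommGroup V] [Module ℂ V]
variable (ρ : A →ₐ[ℂ] Module.End ℂ V)

theorem exists_inverse
    (hsimp : ∀ W : Submodule ℂ V, (∀ (a : A) x, x ∈ W → ρ a x ∈ W) → W = ⊥ ∨ W = ⊤)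
    (φ : Module.End ℂ V) (hφ : ∀ a, φ * ρ a = ρ a * φ) (hne : φ ≠ 0) :
    ∃ ψ : Module.End ℂ V, (∀ a, ψ * ρ a = ρ a * ψ) ∧ φ * ψ = 1 ∧ ψ * φ = 1 := by
  have hcomm : ∀ (a : A) x, φ (ρ a x) = ρ a (φ x) := by
    intro a x
    have := congrArg (fun f : Module.End ℂ V => f x) (hφ a)
    simpa only [Module.End.mul_apply] using this
  have hker : LinearMap.ker φ = ⊥ := by
    have hinv : ∀ (a : A) x, x ∈ LinearMap.ker φ → ρ a x ∈ LinearMap.ker φ := by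
      intro a x hx
      simp only [LinearMap.mem_ker] at hx ⊢
      rw [hcomm, hx, map_zero]
    rcases hsimp _ hinv with h | h
    · exact h
    · exact absurd (LinearMap.ker_eq_top.mp h) hne
  have hran : LinearMap.range φ = ⊤ := by
    have hinv : ∀ (a : A) x, x ∈ LinearMap.range φ → ρ a x ∈ LinearMap.range φ := by
      rintro a x ⟨y, rfl⟩
      exact ⟨ρ a y, hcomm a y⟩
    rcases hsimp _ hinv with h | h
    · exact absurd (LinearMap.range_eq_bot.mp h) hne
    · exact h
  have hbij : Function.Bijective φ :=
    ⟨LinearMap.ker_eq_bot.mp hker, LinearMap.range_eq_top.mp hran⟩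
  let e : V ≃ₗ[ℂ] V := LinearEquiv.ofBijective φ hbij
  have h1 : ∀ y, φ (e.symm y) = y := fun y => e.apply_symm_apply y
  have h2 : ∀ y, e.symm (φ y) = y := fun y => e.symm_apply_apply y
  refine ⟨e.symm.toLinearMap, ?_, ?_, ?_⟩
  · intro a
    apply LinearMap.ext
    intro x
    apply hbij.injective
    simp only [Module.End.mul_apply, LinearEquiv.coe_coe]
    rw [h1, hcomm, h1]
  · exact LinearMap.ext fun x => h1 x
  · exact LinearMap.ext fun x => h2 x

theorem exists_cyclic
    (hsimp : ∀ W : Submodule ℂ V, (∀ (a : A) x, x ∈ W → ρ a x ∈ W) → W = ⊥ ∨ W = ⊤)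
    (v₀ : V) (h0 : v₀ ≠ 0) (w : V) : ∃ a : A, ρ a v₀ = w := by
  let T : A →ₗ[ℂ] V :=
    { toFun := fun a => ρ a v₀
      map_add' := by intro a b; simp [map_add, LinearMap.add_apply]
      map_smul' := by intro c a; simp [map_smul, LinearMap.smul_apply] }
  have hinv : ∀ (a : A) x, x ∈ LinearMap.range T → ρ a x ∈ LinearMap.range T := by
    rintro a x ⟨b, rfl⟩
    exact ⟨a * b, by simp [T, map_mul, Module.End.mul_apply]⟩
  have hW : LinearMap.range T = ⊤ := by
    rcases hsimp _ hinv with h | h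
    · exfalso
      have : v₀ ∈ LinearMap.range T := ⟨1, by simp [T]⟩
      rw [h] at this
      exact h0 (by simpa using this)
    · exact h
  have : w ∈ LinearMap.range T := hW ▸ Submodule.mem_top
  exact this

theorem rank_V_le
    (hsimp : ∀ W : Submodule ℂ V, (∀ (a : A) x, x ∈ W → ρ a x ∈ W) → W = ⊥ ∨ W = ⊤)
    (hA : Module.rank ℂ A ≤ ℵ₀) (v₀ : V) (h0 : v₀ ≠ 0) :
    Module.rank ℂ V ≤ ℵ₀ := by
  let T : A →ₗ[ℂ] V :=
    { toFun := fun a => ρ a v₀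
      map_add' := by intro a b; simp [map_add, LinearMap.add_apply]
      map_smul' := by intro c a; simp [map_smul, LinearMap.smul_apply] }
  have hsurj : Function.Surjective T := fun w => exists_cyclic ρ hsimp v₀ h0 w
  exact (LinearMap.rank_le_of_surjective T hsurj).trans hA

theorem schur_scalar
    (hinv : ∀ (φ : Module.End ℂ V), (∀ a, φ * ρ a = ρ a * φ) → φ ≠ 0 →
      ∃ ψ : Module.End ℂ V, (∀ a, ψ * ρ a = ρ a * ψ) ∧ φ * ψ = 1 ∧ ψ * φ = 1)
    (hV : Module.rank ℂ V ≤ ℵ₀)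
    (v₀ : V) (h0 : v₀ ≠ 0)
    (φ : Module.End ℂ V) (hφ : ∀ a, φ * ρ a = ρ a * φ) :
    ∃ c : ℂ, φ = c • 1 := by
  by_contra hcon
  push_neg at hcon
  have hnz : ∀ c : ℂ, φ - c • 1 ≠ 0 := fun c h => hcon c (by rwa [sub_eq_zero] at h)
  have hcm : ∀ c : ℂ, ∀ a, (φ - c • 1) * ρ a = ρ a * (φ - c • 1) := by
    intro c a
    rw [sub_mul, mul_sub, hφ, smul_mul_assoc, mul_smul_comm, one_mul, mul_one]
  choose ψ hψc hψ1 hψ2 using fun c : ℂ => hinv _ (hcm c) (hnz c)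
  have hnontriv : (1 : Module.End ℂ V) ≠ 0 := by
    intro h
    have := congrArg (fun f : Module.End ℂ V => f v₀) h
    simp only [Module.End.one_apply, LinearMap.zero_apply] at this
    exact h0 this
  -- step 1 : polynomials do not annihilate φ
  have key : ∀ m : ℕ, ∀ q : ℂ[X], q.natDegree = m → q ≠ 0 → aeval φ q ≠ 0 := by
    intro m
    induction m using Nat.strong_induction_on with
    | _ m ih =>
      intro q hdeg hq0
      rcases Nat.eq_zero_or_pos m with hm | hm
      · subst hm
        obtain ⟨c, rfl⟩ := Polynomial.natDegree_eq_zero.mp hdeg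
        have hc' : c ≠ 0 := fun h' => hq0 (by rw [h', map_zero])
        intro h
        rw [aeval_C, Algebra.algebraMap_eq_smul_one] at h
        rcases smul_eq_zero.mp h with h | h
        · exact hc' h
        · exact hnontriv h
      · have hdeg' : q.degree ≠ 0 := by
          rw [degree_eq_natDegree hq0, hdeg]
          exact_mod_cast hm.ne'
        obtain ⟨r, hr⟩ := IsAlgClosed.exists_root q hdeg'
        obtain ⟨q₁, rfl⟩ := dvd_iff_isRoot.mpr hr
        have hq₁0 : q₁ ≠ 0 := right_ne_zero_of_mul hq0
        have hdeg₁ : q₁.natDegree < m := by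
          rw [← hdeg, natDegree_mul (X_sub_C_ne_zero r) hq₁0, natDegree_X_sub_C]
          omega
        intro h
        rw [map_mul] at h
        have hX : aeval φ (X - C r) = φ - r • 1 := by
          simp [Algebra.algebraMap_eq_smul_one]
        rw [hX] at h
        have : aeval φ q₁ = 0 := by
          have := congrArg (fun f => ψ r * f) h
          simpa [← mul_assoc, hψ2 r] using this
        exact ih q₁.natDegree hdeg₁ q₁ rfl hq₁0 this
  -- step 2 : the resolvent family is linearly dependent
  have hnli : ¬ LinearIndependent ℂ (fun c : ℂ => ψ c v₀) := by
    intro h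
    have := h.cardinal_le_rank
    rw [mk_complex] at this
    exact absurd (this.trans hV) (by simpa using aleph0_lt_continuum.not_ge)
  rw [linearIndependent_iff'] at hnli
  push_neg at hnli
  obtain ⟨s, g, hsum, c₀, hc₀s, hg⟩ := hnli
  set E : Module.End ℂ V := ∑ c ∈ s, g c • ψ c with hE
  have hEcomm : ∀ a, E * ρ a = ρ a * E := by
    intro a
    rw [hE, Finset.sum_mul, Finset.mul_sum]
    exact Finset.sum_congr rfl fun c hc => by rw [smul_mul_assoc, mul_smul_comm, hψc]
  have hEv : E v₀ = 0 := by
    rw [hE]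
    simpa [LinearMap.sum_apply, LinearMap.smul_apply] using hsum
  have hE0 : E = 0 := by
    by_contra hne
    obtain ⟨ψE, _, _, hψE2⟩ := hinv E hEcomm hne
    have hid : ψE (E v₀) = v₀ := by
      have := congrArg (fun f : Module.End ℂ V => f v₀) hψE2
      simpa [Module.End.mul_apply] using this
    rw [hEv, map_zero] at hid
    exact h0 hid.symm
  -- step 3 : produce a nonzero annihilating polynomial
  set q : ℂ[X] := ∑ c ∈ s, g c • ∏ μ ∈ s.erase c, (X - C μ) with hq
  have haq : aeval φ q = 0 := by
    have hP : ∀ c ∈ s, ψ c * aeval φ (∏ μ ∈ s, (X - C μ))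
        = aeval φ (∏ μ ∈ s.erase c, (X - C μ)) := by
      intro c hcs
      rw [← Finset.mul_prod_erase s _ hcs, map_mul, ← mul_assoc]
      rw [show aeval φ (X - C c) = φ - c • 1 by simp [Algebra.algebraMap_eq_smul_one]]
      rw [hψ2 c, one_mul]
    have hsm : ∑ c ∈ s, g c • aeval φ (∏ μ ∈ s.erase c, (X - C μ))
        = (∑ c ∈ s, g c • ψ c) * aeval φ (∏ μ ∈ s, (X - C μ)) := by
      rw [Finset.sum_mul]
      exact Finset.sum_congr rfl fun c hcs => by rw [smul_mul_assoc, hP c hcs]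
    rw [hq, map_sum]
    simp only [map_smul]
    rw [hsm, ← hE, hE0, zero_mul]
  have hqne : q ≠ 0 := by
    intro h
    have he : eval c₀ q = 0 := by rw [h, eval_zero]
    rw [hq] at he
    simp only [eval_finset_sum, eval_smul, eval_prod, eval_sub, eval_X, eval_C,
      smul_eq_mul] at he
    rw [Finset.sum_eq_single c₀] at he
    · have h1 : ∏ μ ∈ s.erase c₀, (c₀ - μ) ≠ 0 := by
        rw [Finset.prod_ne_zero_iff]
        intro μ hμ
        exact sub_ne_zero.mpr (Finset.ne_of_mem_erase hμ).symm
      exact mul_ne_zero hg h1 he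
    · intro c hcs hcne
      exact mul_eq_zero_of_right _
        (Finset.prod_eq_zero (Finset.mem_erase.mpr ⟨hcne.symm, hc₀s⟩) (sub_self c₀))
    · intro h'; exact absurd hc₀s h'
  exact key q.natDegree q rfl hqne haq


theorem density
    (hsimp : ∀ W : Submodule ℂ V, (∀ (a : A) x, x ∈ W → ρ a x ∈ W) → W = ⊥ ∨ W = ⊤)
    (hV : Module.rank ℂ V ≤ ℵ₀)
    (n : ℕ) : ∀ (v v' : Fin n → V), LinearIndependent ℂ v →
      ∃ a : A, ∀ i, ρ a (v i) = v' i := by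
  induction n with
  | zero => exact fun v v' _ => ⟨0, fun i => i.elim0⟩
  | succ n ih =>
    intro v v' hv
    have claim : ∀ i : Fin (n + 1), ∃ a : A, ρ a (v i) ≠ 0 ∧ ∀ j, j ≠ i → ρ a (v j) = 0 := by
      intro i
      by_contra hc
      have key : ∀ a : A, (∀ j, j ≠ i → ρ a (v j) = 0) → ρ a (v i) = 0 := by
        intro a h
        by_contra hne
        exact hc ⟨a, hne, h⟩
      have hw : LinearIndependent ℂ (fun k : Fin n => v (i.succAbove k)) :=
        hv.comp _ Fin.succAbove_right_injective
      have sel : ∀ (k : Fin n) (x : V), ∃ a : A,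
          ∀ j : Fin n, ρ a (v (i.succAbove j)) = if j = k then x else 0 := by
        intro k x
        obtain ⟨a, ha⟩ := ih (fun k => v (i.succAbove k)) (fun j => if j = k then x else 0) hw
        exact ⟨a, ha⟩
      choose sa hsa using sel
      have wd : ∀ (a b : A), (∀ j : Fin n, ρ a (v (i.succAbove j)) = ρ b (v (i.succAbove j))) →
          ρ a (v i) = ρ b (v i) := by
        intro a b h
        have h1 : ∀ j, j ≠ i → ρ (a - b) (v j) = 0 := by
          intro j hj
          obtain ⟨k, rfl⟩ := Fin.exists_succAbove_eq hj
          rw [map_sub, LinearMap.sub_apply, h k, sub_self]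
        have h2 := key (a - b) h1
        rw [map_sub, LinearMap.sub_apply, sub_eq_zero] at h2
        exact h2
      let d : Fin n → Module.End ℂ V := fun k =>
        { toFun := fun x => ρ (sa k x) (v i)
          map_add' := fun x y => by
            show ρ (sa k (x + y)) (v i) = ρ (sa k x) (v i) + ρ (sa k y) (v i)
            have h : ρ (sa k (x + y)) (v i) = ρ (sa k x + sa k y) (v i) := by
              apply wd
              intro j
              rw [map_add, LinearMap.add_apply, hsa, hsa, hsa]
              by_cases hj : j = k <;> simp [hj]
            rw [h, map_add, LinearMap.add_apply]
          map_smul' := fun cc x => by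
            show ρ (sa k (cc • x)) (v i) = cc • ρ (sa k x) (v i)
            have h : ρ (sa k (cc • x)) (v i) = ρ (cc • sa k x) (v i) := by
              apply wd
              intro j
              rw [map_smul, LinearMap.smul_apply, hsa, hsa]
              by_cases hj : j = k <;> simp [hj]
            rw [h, map_smul, LinearMap.smul_apply] }
      have hdcomm : ∀ k (bb : A), d k * ρ bb = ρ bb * d k := by
        intro k bb
        apply LinearMap.ext
        intro x
        simp only [Module.End.mul_apply]
        show ρ (sa k (ρ bb x)) (v i) = ρ bb (ρ (sa k x) (v i))
        have h : ρ (sa k (ρ bb x)) (v i) = ρ (bb * sa k x) (v i) := by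
          apply wd
          intro j
          rw [map_mul, Module.End.mul_apply, hsa, hsa]
          by_cases hj : j = k <;> simp [hj]
        rw [h, map_mul, Module.End.mul_apply]
      have hscal : ∀ k, ∃ c : ℂ, d k = c • 1 := fun k =>
        schur_scalar ρ (fun φ hφ hne => exists_inverse ρ hsimp φ hφ hne) hV (v i)
          (hv.ne_zero i) (d k) (hdcomm k)
      choose c hc using hscal
      have hvi : ρ (∑ k : Fin n, sa k (v (i.succAbove k))) (v i) = v i := by
        have haw : ∀ j : Fin n,
            ρ (∑ k : Fin n, sa k (v (i.succAbove k))) (v (i.succAbove j)) = v (i.succAbove j) := by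
          intro j
          rw [map_sum, LinearMap.sum_apply]
          rw [Finset.sum_congr rfl fun k _ => hsa k (v (i.succAbove k)) j]
          simp
        have h1 : ∀ j, j ≠ i → ρ (∑ k : Fin n, sa k (v (i.succAbove k)) - 1) (v j) = 0 := by
          intro j hj
          obtain ⟨k, rfl⟩ := Fin.exists_succAbove_eq hj
          rw [map_sub, map_one, LinearMap.sub_apply, haw, Module.End.one_apply, sub_self]
        have h2 := key _ h1
        rw [map_sub, map_one, LinearMap.sub_apply, Module.End.one_apply, sub_eq_zero] at h2
        exact h2
      have hvi2 : ρ (∑ k : Fin n, sa k (v (i.succAbove k))) (v i)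
          = ∑ k : Fin n, c k • v (i.succAbove k) := by
        rw [map_sum, LinearMap.sum_apply]
        refine Finset.sum_congr rfl fun k _ => ?_
        have hd : ρ (sa k (v (i.succAbove k))) (v i) = d k (v (i.succAbove k)) := rfl
        rw [hd, hc k]
        simp
      have hmem : v i ∈ Submodule.span ℂ (v '' {i}ᶜ) := by
        rw [← hvi, hvi2]
        refine Submodule.sum_mem _ fun k _ => Submodule.smul_mem _ _ (Submodule.subset_span ?_)
        exact ⟨i.succAbove k, by simp [Fin.succAbove_ne], rfl⟩
      exact hv.notMem_span_image (by simp) hmem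
    have hsel : ∀ i : Fin (n + 1), ∃ a : A, ρ a (v i) = v' i ∧ ∀ j, j ≠ i → ρ a (v j) = 0 := by
      intro i
      obtain ⟨a, hne, hzero⟩ := claim i
      obtain ⟨bb, hb⟩ := exists_cyclic ρ hsimp _ hne (v' i)
      refine ⟨bb * a, ?_, ?_⟩
      · rw [map_mul, Module.End.mul_apply, hb]
      · intro j hj
        rw [map_mul, Module.End.mul_apply, hzero j hj, map_zero]
    choose aa haa1 haa2 using hsel
    refine ⟨∑ i, aa i, fun j => ?_⟩
    rw [map_sum, LinearMap.sum_apply, Finset.sum_eq_single j]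
    · exact haa1 j
    · exact fun i _ hij => haa2 i j (Ne.symm hij)
    · intro h; exact absurd (Finset.mem_univ j) h

end Density

theorem stmt1 (L : Type) [LieRing L] [LieAlgebra ℂ L]
    (ι : Type) [Countable ι] (b : Module.Basis ι ℂ L)
    (V : Type) [AddCommGroup V] [Module ℂ V] [LieRingModule L V] [LieModule ℂ L V]
    [IsSimpleOrder (LieSubmodule ℂ L V)]
    (n : ℕ) (v v' : Fin n → V) (hv : LinearIndependent ℂ v) :
    ∃ u : UniversalEnvelopingAlgebra ℂ L,
      ∀ i, (UniversalEnvelopingAlgebra.lift ℂ (LieModule.toEnd ℂ L V)) u (v i) = v' i := by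
  classical
  set ρ := UniversalEnvelopingAlgebra.lift ℂ (LieModule.toEnd ℂ L V) with hρ
  have hsimp : ∀ W : Submodule ℂ V,
      (∀ (a : UniversalEnvelopingAlgebra ℂ L) x, x ∈ W → ρ a x ∈ W) → W = ⊥ ∨ W = ⊤ := by
    intro W hW
    let N : LieSubmodule ℂ L V :=
      { W with
        lie_mem := by
          intro x m hm
          have h := hW (UniversalEnvelopingAlgebra.ι ℂ x) m hm
          rw [hρ, UniversalEnvelopingAlgebra.lift_ι_apply] at h
          simpa [LieModule.toEnd_apply_apply] using h }
    rcases eq_bot_or_eq_top N with h | h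
    · left
      have : (N : Submodule ℂ V) = ((⊥ : LieSubmodule ℂ L V) : Submodule ℂ V) := by rw [h]
      simpa only [LieSubmodule.bot_toSubmodule] using this
    · right
      have : (N : Submodule ℂ V) = ((⊤ : LieSubmodule ℂ L V) : Submodule ℂ V) := by rw [h]
      simpa only [LieSubmodule.top_toSubmodule] using this
  have hnt : ∃ v₀ : V, v₀ ≠ 0 := by
    by_contra h
    push_neg at h
    have hbt : (⊥ : LieSubmodule ℂ L V) = ⊤ := by
      ext m
      simp [h m]
    exact bot_ne_top hbt
  have hA : Module.rank ℂ (UniversalEnvelopingAlgebra ℂ L) ≤ Cardinal.aleph0 := by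
    have hsurj : Function.Surjective (UniversalEnvelopingAlgebra.mkAlgHom ℂ L) :=
      RingCon.mkₐ_surjective _
    have h1 := LinearMap.rank_le_of_surjective
      (UniversalEnvelopingAlgebra.mkAlgHom ℂ L).toLinearMap hsurj
    refine h1.trans ?_
    rw [← (b.tensorAlgebra).mk_eq_rank'']
    have : Countable (FreeMonoid ι) := inferInstanceAs (Countable (List ι))
    exact Cardinal.mk_le_aleph0
  obtain ⟨v₀, h0⟩ := hnt
  exact density ρ hsimp (rank_V_le ρ hsimp hA v₀ h0) n v v' hv
end

section
/- Let L be a Lie algebra over ℂ with countable basis, and V₁, V₂ L-modules. Suppose that for every finite subset S ⊂ V₂, V₁ is a simple module over the annihilator subalgebra ann_L(S) = {g ∈ L : g·s = 0 for all s ∈ S}. Then every L-submodule of V₁ ⊗ V₂ has the form V₁ ⊗ V₂' for some L-submodule V₂' of V₂. -/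
open scoped TensorProduct

open Polynomial

variable {V : Type} [AddCommGroup V] [Module ℂ V]

lemma aeval_inj (φ : Module.End ℂ V)
    (hinj : ∀ c : ℂ, Function.Injective (φ - algebraMap ℂ (Module.End ℂ V) c)) :
    ∀ q : ℂ[X], q ≠ 0 → Function.Injective (Polynomial.aeval φ q) := by
  suffices H : ∀ n (q : ℂ[X]), q.natDegree = n → q ≠ 0 →
      Function.Injective (Polynomial.aeval φ q) by
    exact fun q hq => H q.natDegree q rfl hq
  intro n
  induction n using Nat.strong_induction_on with
  | _ n ih =>
    intro q hd hq
    rcases eq_or_ne n 0 with rfl | hn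
    · rw [Polynomial.eq_C_of_natDegree_eq_zero hd]
      have ha : q.coeff 0 ≠ 0 := by
        intro h0
        exact hq (by conv_lhs => rw [Polynomial.eq_C_of_natDegree_eq_zero hd, h0, map_zero])
      rw [Polynomial.aeval_C]
      intro x y hxy
      exact smul_right_injective V ha (by simpa [Module.algebraMap_end_apply] using hxy)
    · have hdeg : 0 < q.degree := Polynomial.natDegree_pos_iff_degree_pos.mp (by omega)
      obtain ⟨z, hz⟩ := Complex.exists_root hdeg
      obtain ⟨q₂, rfl⟩ := (Polynomial.dvd_iff_isRoot.mpr hz)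
      have hq₂ : q₂ ≠ 0 := fun h => hq (by rw [h, mul_zero])
      have hXz : (X - C z : ℂ[X]) ≠ 0 := Polynomial.X_sub_C_ne_zero z
      have hdeg2 : q₂.natDegree < n := by
        rw [← hd, Polynomial.natDegree_mul hXz hq₂, Polynomial.natDegree_X_sub_C]
        omega
      have : Polynomial.aeval φ ((X - C z) * q₂) = (φ - algebraMap ℂ (Module.End ℂ V) z) * Polynomial.aeval φ q₂ := by
        rw [map_mul, map_sub, Polynomial.aeval_X, Polynomial.aeval_C]
      rw [this]
      exact (hinj z).comp (ih q₂.natDegree hdeg2 q₂ rfl hq₂)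

lemma schurD (hrank : Module.rank ℂ V ≤ Cardinal.aleph0) [Nontrivial V]
    (T : Set (Module.End ℂ V))
    (hsimp : ∀ W : Submodule ℂ V, (∀ f ∈ T, ∀ w ∈ W, f w ∈ W) → W = ⊥ ∨ W = ⊤)
    (φ : Module.End ℂ V) (hcomm : ∀ f ∈ T, φ * f = f * φ) :
    ∃ c : ℂ, φ = algebraMap ℂ (Module.End ℂ V) c := by
  by_cases hev : ∃ c : ℂ, ∃ v : V, v ≠ 0 ∧ φ v = c • v
  · obtain ⟨c, v, hv, hφv⟩ := hev
    refine ⟨c, ?_⟩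
    have hker : ∀ f ∈ T, ∀ w ∈ LinearMap.ker (φ - algebraMap ℂ (Module.End ℂ V) c),
        f w ∈ LinearMap.ker (φ - algebraMap ℂ (Module.End ℂ V) c) := by
      intro f hf w hw
      rw [LinearMap.mem_ker] at hw ⊢
      have : (φ - algebraMap ℂ (Module.End ℂ V) c) * f = f * (φ - algebraMap ℂ (Module.End ℂ V) c) := by
        rw [sub_mul, mul_sub, hcomm f hf, Algebra.commutes]
      calc (φ - algebraMap ℂ (Module.End ℂ V) c) (f w)
          = ((φ - algebraMap ℂ (Module.End ℂ V) c) * f) w := rfl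
        _ = f ((φ - algebraMap ℂ (Module.End ℂ V) c) w) := by rw [this]; rfl
        _ = 0 := by rw [hw, map_zero]
    rcases hsimp _ hker with hbot | htop
    · exfalso
      apply hv
      have : v ∈ LinearMap.ker (φ - algebraMap ℂ (Module.End ℂ V) c) := by
        rw [LinearMap.mem_ker, LinearMap.sub_apply, hφv, Module.algebraMap_end_apply, sub_self]
      rw [hbot] at this
      simpa using this
    · have : φ - algebraMap ℂ (Module.End ℂ V) c = 0 := LinearMap.ker_eq_top.mp htop
      exact sub_eq_zero.mp this
  · exfalso
    push_neg at hev
    set ψ : ℂ → Module.End ℂ V := fun c => φ - algebraMap ℂ (Module.End ℂ V) c with hψ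
    have hinj : ∀ c : ℂ, Function.Injective (ψ c) := by
      intro c
      rw [← LinearMap.ker_eq_bot, Submodule.eq_bot_iff]
      intro x hx
      rw [LinearMap.mem_ker, LinearMap.sub_apply, Module.algebraMap_end_apply,
        sub_eq_zero] at hx
      by_contra hx0
      exact hev c x hx0 hx
    have hsurj : ∀ c : ℂ, Function.Surjective (ψ c) := by
      intro c
      rw [← LinearMap.range_eq_top]
      have hr : ∀ f ∈ T, ∀ w ∈ LinearMap.range (ψ c), f w ∈ LinearMap.range (ψ c) := by
        rintro f hf _ ⟨x, rfl⟩
        refine ⟨f x, ?_⟩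
        have : ψ c * f = f * ψ c := by
          rw [hψ, sub_mul, mul_sub, hcomm f hf, Algebra.commutes]
        calc (ψ c) (f x) = (ψ c * f) x := rfl
          _ = (f * ψ c) x := by rw [this]
          _ = f ((ψ c) x) := rfl
      rcases hsimp _ hr with hbot | htop
      · exfalso
        have hz : ψ c = 0 := LinearMap.range_eq_bot.mp hbot
        obtain ⟨v, hv⟩ := exists_ne (0 : V)
        apply hev c v hv
        have := congrArg (fun g : Module.End ℂ V => g v) hz
        simpa [hψ, sub_eq_zero, Module.algebraMap_end_apply] using this
      · exact htop
    set e : ℂ → (V ≃ₗ[ℂ] V) := fun c => LinearEquiv.ofBijective (ψ c) ⟨hinj c, hsurj c⟩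
      with he
    obtain ⟨v, hv⟩ := exists_ne (0 : V)
    have hLI : LinearIndependent ℂ (fun c : ℂ => (e c).symm v) := by
      rw [linearIndependent_iff]
      intro l hl
      by_contra hl0
      obtain ⟨c₀, hc₀s, hc₀⟩ : ∃ c₀ ∈ l.support, l c₀ ≠ 0 := by
        obtain ⟨c₀, hc₀⟩ := Finsupp.ne_iff.mp hl0
        exact ⟨c₀, Finsupp.mem_support_iff.mpr (by simpa using hc₀), by simpa using hc₀⟩
      set s := l.support with hs
      set q : ℂ[X] := ∑ c ∈ s, Polynomial.C (l c) * ∏ d ∈ s.erase c, (X - C d) with hqdef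
      have hq0 : q ≠ 0 := by
        intro h0
        have : q.eval c₀ = 0 := by rw [h0, Polynomial.eval_zero]
        rw [hqdef] at this
        simp only [Polynomial.eval_finset_sum, Polynomial.eval_mul, Polynomial.eval_C,
          Polynomial.eval_prod, Polynomial.eval_sub, Polynomial.eval_X] at this
        rw [Finset.sum_eq_single c₀ (fun c hc hne => ?_) (fun habs => absurd hc₀s habs)] at this
        · refine hc₀ ?_
          have hprod : ∏ d ∈ s.erase c₀, (c₀ - d) ≠ 0 := by
            refine Finset.prod_ne_zero_iff.mpr fun d hd => ?_
            have : d ≠ c₀ := (Finset.mem_erase.mp hd).1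
            exact sub_ne_zero.mpr (Ne.symm this)
          exact (mul_eq_zero.mp this).resolve_right hprod
        · refine mul_eq_zero_of_right _ ?_
          exact Finset.prod_eq_zero (Finset.mem_erase.mpr ⟨Ne.symm hne, hc₀s⟩) (sub_self c₀)
      have hqv : (Polynomial.aeval φ q) v = 0 := by
        have expand : ∀ c ∈ s,
            (Polynomial.aeval φ (∏ d ∈ s, (X - C d))) ((e c).symm v)
              = (Polynomial.aeval φ (∏ d ∈ s.erase c, (X - C d))) v := by
          intro c hc
          have hsplit : (∏ d ∈ s, (X - C d)) = (∏ d ∈ s.erase c, (X - C d)) * (X - C c) := by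
            rw [mul_comm]
            exact (Finset.mul_prod_erase s (fun d => (X : ℂ[X]) - C d) hc).symm
          rw [hsplit, map_mul]
          have haX : Polynomial.aeval φ (X - C c) = ψ c := by
            rw [map_sub, Polynomial.aeval_X, Polynomial.aeval_C]
          have : (ψ c) ((e c).symm v) = v := by
            have := (e c).apply_symm_apply v
            exact this
          rw [Module.End.mul_apply, haX, this]
        have happ := congrArg (Polynomial.aeval φ (∏ d ∈ s, (X - C d))) hl
        rw [map_zero] at happ
        rw [Finsupp.linearCombination_apply, Finsupp.sum, map_sum] at happ
        have : ∑ c ∈ s, l c • (Polynomial.aeval φ (∏ d ∈ s.erase c, (X - C d))) v = 0 := by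
          rw [← happ]
          refine Finset.sum_congr rfl fun c hc => ?_
          rw [map_smul, expand c hc]
        rw [hqdef]
        rw [map_sum]
        rw [LinearMap.sum_apply]
        rw [← this]
        refine Finset.sum_congr rfl fun c hc => ?_
        rw [map_mul, Polynomial.aeval_C, Module.End.mul_apply, Module.algebraMap_end_apply]
      exact hv (by
        have := aeval_inj φ (fun c => hinj c) q hq0
        have h0 : (Polynomial.aeval φ q) v = (Polynomial.aeval φ q) 0 := by
          rw [hqv, map_zero]
        exact this h0)
    have hcard : (Cardinal.mk ℂ) ≤ Module.rank ℂ V := hLI.cardinal_le_rank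
    have : (Cardinal.mk ℂ) ≤ Cardinal.aleph0 := hcard.trans hrank
    rw [Cardinal.mk_complex] at this
    exact absurd this (not_le.mpr Cardinal.aleph0_lt_continuum)

lemma adjoin_stable (T : Set (Module.End ℂ V)) (W : Submodule ℂ V)
    (hW : ∀ f ∈ T, ∀ w ∈ W, f w ∈ W) :
    ∀ p ∈ Algebra.adjoin ℂ T, ∀ w ∈ W, p w ∈ W := by
  intro p hp
  induction hp using Algebra.adjoin_induction with
  | mem f hf => exact hW f hf
  | algebraMap r =>
    intro w hw
    rw [Module.algebraMap_end_apply]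
    exact W.smul_mem r hw
  | add a b ha hb iha ihb =>
    intro w hw
    rw [LinearMap.add_apply]
    exact W.add_mem (iha w hw) (ihb w hw)
  | mul a b ha hb iha ihb =>
    intro w hw
    rw [Module.End.mul_apply]
    exact iha _ (ihb w hw)

/-- transitivity: `A x = V` for `x ≠ 0`. -/
lemma density_one [Nontrivial V] (T : Set (Module.End ℂ V))
    (hsimp : ∀ W : Submodule ℂ V, (∀ f ∈ T, ∀ w ∈ W, f w ∈ W) → W = ⊥ ∨ W = ⊤)
    (x : V) (hx : x ≠ 0) (y : V) :
    ∃ p ∈ Algebra.adjoin ℂ T, p x = y := by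
  let W : Submodule ℂ V :=
    { carrier := {w | ∃ p ∈ Algebra.adjoin ℂ T, p x = w}
      add_mem' := by
        rintro _ _ ⟨p, hp, rfl⟩ ⟨q, hq, rfl⟩
        exact ⟨p + q, add_mem hp hq, rfl⟩
      zero_mem' := ⟨0, zero_mem _, rfl⟩
      smul_mem' := by
        rintro c _ ⟨p, hp, rfl⟩
        exact ⟨c • p, (Algebra.adjoin ℂ T).smul_mem hp c, rfl⟩ }
  have hWinv : ∀ f ∈ T, ∀ w ∈ W, f w ∈ W := by
    rintro f hf _ ⟨p, hp, rfl⟩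
    exact ⟨f * p, mul_mem (Algebra.subset_adjoin hf) hp, rfl⟩
  have hxW : x ∈ W := ⟨1, one_mem _, by simp⟩
  rcases hsimp W hWinv with hbot | htop
  · exact absurd (hbot ▸ hxW) (by simpa using hx)
  · have hy : y ∈ W := by rw [htop]; trivial
    exact hy

lemma density_aux (hrank : Module.rank ℂ V ≤ Cardinal.aleph0) [Nontrivial V]
    (T : Set (Module.End ℂ V))
    (hsimp : ∀ W : Submodule ℂ V, (∀ f ∈ T, ∀ w ∈ W, f w ∈ W) → W = ⊥ ∨ W = ⊤) :
    ∀ (n : ℕ) (v : Fin n → V) (x : V), LinearIndependent ℂ (Fin.cons x v) →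
      ∃ p ∈ Algebra.adjoin ℂ T, (∀ i, p (v i) = 0) ∧ p x ≠ 0 := by
  intro n
  induction n with
  | zero =>
    intro v x hx
    refine ⟨1, one_mem _, fun i => i.elim0, ?_⟩
    have := hx.ne_zero 0
    rw [Fin.cons_zero] at this
    exact fun h => this (by rw [← h]; rfl)
  | succ n ih =>
    intro v x hx
    by_contra hcon
    push_neg at hcon
    have hcon' : ∀ p ∈ Algebra.adjoin ℂ T, (∀ i, p (v i) = 0) → p x = 0 := by
      intro p hp hk
      exact hcon p hp hk
    set z := v 0 with hz
    set vt : Fin n → V := Fin.tail v with hvt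
    have hvind : LinearIndependent ℂ v := by
      have h1 := hx.comp Fin.succ (Fin.succ_injective _)
      have h2 : (Fin.cons x v ∘ Fin.succ) = v := funext fun i => by simp [Function.comp]
      rwa [h2] at h1
    have hvtind : LinearIndependent ℂ vt := by
      have h1 := hvind.comp Fin.succ (Fin.succ_injective _)
      exact h1
    have hvz : LinearIndependent ℂ (Fin.cons z vt) := by
      rw [hz, hvt, Fin.cons_self_tail]; exact hvind
    obtain ⟨p₀, hp₀A, hp₀kill, hp₀z⟩ := ih vt z hvz
    -- the orbit submodule {p z : p ∈ A, p kills vt} is everything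
    have htot : ∀ a : V, ∃ p, p ∈ Algebra.adjoin ℂ T ∧ (∀ i, p (vt i) = 0) ∧ p z = a := by
      let W : Submodule ℂ V :=
        { carrier := {w | ∃ p, p ∈ Algebra.adjoin ℂ T ∧ (∀ i, p (vt i) = 0) ∧ p z = w}
          add_mem' := by
            rintro _ _ ⟨p, hp, hpk, rfl⟩ ⟨q, hq, hqk, rfl⟩
            exact ⟨p + q, add_mem hp hq,
              fun i => by rw [LinearMap.add_apply, hpk, hqk, add_zero], rfl⟩
          zero_mem' := ⟨0, zero_mem _, fun i => rfl, rfl⟩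
          smul_mem' := by
            rintro c _ ⟨p, hp, hpk, rfl⟩
            exact ⟨c • p, (Algebra.adjoin ℂ T).smul_mem hp c,
              fun i => by rw [LinearMap.smul_apply, hpk, smul_zero], rfl⟩ }
      have hWinv : ∀ f ∈ T, ∀ w ∈ W, f w ∈ W := by
        rintro f hf _ ⟨p, hp, hpk, rfl⟩
        exact ⟨f * p, mul_mem (Algebra.subset_adjoin hf) hp,
          fun i => by rw [Module.End.mul_apply, hpk, map_zero], rfl⟩
      rcases hsimp W hWinv with hbot | htop
      · exfalso
        have : p₀ z ∈ W := ⟨p₀, hp₀A, hp₀kill, rfl⟩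
        rw [hbot] at this
        exact hp₀z (by simpa using this)
      · intro a
        have : a ∈ W := by rw [htop]; trivial
        exact this
    choose P hPA hPkill hPz using htot
    have huniq : ∀ p ∈ Algebra.adjoin ℂ T, (∀ i, p (vt i) = 0) → ∀ a, p z = a →
        p x = P a x := by
      intro p hp hkill a hza
      have hkills : ∀ i : Fin (n + 1), (p - P a) (v i) = 0 := by
        intro i
        refine Fin.cases ?_ ?_ i
        · rw [LinearMap.sub_apply, ← hz, hza, hPz, sub_self]
        · intro j
          have : v j.succ = vt j := rfl
          rw [LinearMap.sub_apply, this, hkill, hPkill, sub_zero]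
      have := hcon' (p - P a) (sub_mem hp (hPA a)) hkills
      rw [LinearMap.sub_apply, sub_eq_zero] at this
      exact this
    let φ : Module.End ℂ V :=
      { toFun := fun a => P a x
        map_add' := fun a a' => by
          have := huniq (P a + P a') (add_mem (hPA a) (hPA a'))
            (fun i => by rw [LinearMap.add_apply, hPkill, hPkill, add_zero])
            (a + a') (by rw [LinearMap.add_apply, hPz, hPz])
          rw [LinearMap.add_apply] at this
          exact this.symm
        map_smul' := fun c a => by
          have := huniq (c • P a) ((Algebra.adjoin ℂ T).smul_mem (hPA a) c)
            (fun i => by rw [LinearMap.smul_apply, hPkill, smul_zero])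
            (c • a) (by rw [LinearMap.smul_apply, hPz])
          rw [LinearMap.smul_apply] at this
          exact this.symm }
    have hφcomm : ∀ f ∈ T, φ * f = f * φ := by
      intro f hf
      ext a
      show P (f a) x = f (P a x)
      have := huniq (f * P a) (mul_mem (Algebra.subset_adjoin hf) (hPA a))
        (fun i => by rw [Module.End.mul_apply, hPkill, map_zero])
        (f a) (by rw [Module.End.mul_apply, hPz])
      rw [Module.End.mul_apply] at this
      exact this.symm
    obtain ⟨c, hc⟩ := schurD hrank T hsimp φ hφcomm
    have hkey : ∀ p ∈ Algebra.adjoin ℂ T, (∀ i, p (vt i) = 0) → p x = c • p z := by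
      intro p hp hkill
      have h1 : p x = P (p z) x := huniq p hp hkill (p z) rfl
      have h2 : P (p z) x = φ (p z) := rfl
      rw [h1, h2, hc, Module.algebraMap_end_apply]
    have hind2 : LinearIndependent ℂ (Fin.cons (x - c • z) vt) := by
      rw [linearIndependent_fin_cons]
      refine ⟨hvtind, fun hmem => ?_⟩
      have hxv := (linearIndependent_fin_cons.mp hx).2
      apply hxv
      have hzmem : z ∈ Submodule.span ℂ (Set.range v) :=
        Submodule.subset_span ⟨0, rfl⟩
      have hsub : Submodule.span ℂ (Set.range vt) ≤ Submodule.span ℂ (Set.range v) := by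
        apply Submodule.span_mono
        rintro _ ⟨j, rfl⟩
        exact ⟨j.succ, rfl⟩
      have : x = (x - c • z) + c • z := by abel
      rw [this]
      exact Submodule.add_mem _ (hsub hmem) (Submodule.smul_mem _ c hzmem)
    obtain ⟨p, hpA, hpk, hpx⟩ := ih vt (x - c • z) hind2
    apply hpx
    rw [map_sub, map_smul, hkey p hpA hpk, sub_self]

lemma density_s2 (hrank : Module.rank ℂ V ≤ Cardinal.aleph0) [Nontrivial V]
    (T : Set (Module.End ℂ V))
    (hsimp : ∀ W : Submodule ℂ V, (∀ f ∈ T, ∀ w ∈ W, f w ∈ W) → W = ⊥ ∨ W = ⊤)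
    (n : ℕ) (v : Fin n → V) (hv : LinearIndependent ℂ v) (y : Fin n → V) :
    ∃ p ∈ Algebra.adjoin ℂ T, ∀ i, p (v i) = y i := by
  cases n with
  | zero => exact ⟨1, one_mem _, fun i => i.elim0⟩
  | succ m =>
    -- for each i, get pᵢ killing others with pᵢ (v i) ≠ 0, then map to y i
    have step : ∀ i : Fin (m + 1), ∃ p ∈ Algebra.adjoin ℂ T,
        (∀ k, k ≠ i → p (v k) = 0) ∧ p (v i) = y i := by
      intro i
      have hre : LinearIndependent ℂ (Fin.cons (v i) (fun j : Fin m => v (i.succAbove j))) := by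
        have hcomp : (Fin.cons (v i) (fun j : Fin m => v (i.succAbove j)))
            = v ∘ (Fin.cons i i.succAbove : Fin (m + 1) → Fin (m + 1)) := by
          funext k
          refine Fin.cases ?_ ?_ k
          · simp
          · intro j; simp
        rw [hcomp]
        refine hv.comp _ ?_
        intro a b hab
        induction a using Fin.cases with
        | zero =>
          induction b using Fin.cases with
          | zero => rfl
          | succ j =>
            rw [Fin.cons_zero, Fin.cons_succ] at hab
            exact absurd hab.symm (Fin.succAbove_ne i j)
        | succ j =>
          induction b using Fin.cases with
          | zero =>
            rw [Fin.cons_zero, Fin.cons_succ] at hab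
            exact absurd hab (Fin.succAbove_ne i j)
          | succ j' =>
            rw [Fin.cons_succ, Fin.cons_succ] at hab
            rw [i.succAbove_right_injective hab]
      obtain ⟨p₁, hp₁A, hp₁k, hp₁x⟩ := density_aux hrank T hsimp m _ _ hre
      obtain ⟨q, hqA, hq⟩ := density_one T hsimp (p₁ (v i)) hp₁x (y i)
      refine ⟨q * p₁, mul_mem hqA hp₁A, ?_, ?_⟩
      · intro k hk
        obtain ⟨j, hj⟩ := Fin.exists_succAbove_eq hk
        rw [← hj, Module.End.mul_apply, hp₁k j, map_zero]
      · rw [Module.End.mul_apply, hq]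
    choose p hpA hpk hpi using step
    refine ⟨∑ i, p i, sum_mem fun i _ => hpA i, ?_⟩
    intro k
    rw [LinearMap.sum_apply, Finset.sum_eq_single k (fun i _ hik => hpk i k (Ne.symm hik))
      (fun habs => absurd (Finset.mem_univ k) habs)]
    exact hpi k

lemma density' (hrank : Module.rank ℂ V ≤ Cardinal.aleph0) [Nontrivial V]
    (T : Set (Module.End ℂ V))
    (hsimp : ∀ W : Submodule ℂ V, (∀ f ∈ T, ∀ w ∈ W, f w ∈ W) → W = ⊥ ∨ W = ⊤)
    {κ : Type} (t : Finset κ) (v : κ → V)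
    (hv : LinearIndependent ℂ (fun i : t => v i)) (y : κ → V) :
    ∃ p ∈ Algebra.adjoin ℂ T, ∀ i ∈ t, p (v i) = y i := by
  let e := t.equivFin.symm
  have hve : LinearIndependent ℂ (fun j : Fin t.card => v (e j)) := hv.comp e e.injective
  obtain ⟨p, hpA, hp⟩ := density_s2 hrank T hsimp t.card (fun j => v (e j)) hve
    (fun j => y (e j))
  refine ⟨p, hpA, fun i hi => ?_⟩
  have := hp (t.equivFin ⟨i, hi⟩)
  simpa [e] using this

/-- `V₁` is a simple module over the annihilator in `L` of the finite set `S ⊆ V₂`: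
it is nonzero and has no nonzero proper subspaces invariant under every `g ∈ L`
annihilating all elements of `S`. -/
def SimpleOverAnn (L : Type) [LieRing L] [LieAlgebra ℂ L]
    (V₁ : Type) [AddCommGroup V₁] [Module ℂ V₁] [LieRingModule L V₁] [LieModule ℂ L V₁]
    (V₂ : Type) [AddCommGroup V₂] [Module ℂ V₂] [LieRingModule L V₂] [LieModule ℂ L V₂]
    (S : Finset V₂) : Prop :=
  Nontrivial V₁ ∧
    ∀ W : Submodule ℂ V₁,
      (∀ g : L, (∀ s ∈ S, ⁅g, s⁆ = (0 : V₂)) → ∀ w ∈ W, ⁅g, w⁆ ∈ W) → W = ⊥ ∨ W = ⊤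

theorem stmt2 (L : Type) [LieRing L] [LieAlgebra ℂ L]
    (ι : Type) [Countable ι] (b : Module.Basis ι ℂ L)
    (V₁ : Type) [AddCommGroup V₁] [Module ℂ V₁] [LieRingModule L V₁] [LieModule ℂ L V₁]
    (V₂ : Type) [AddCommGroup V₂] [Module ℂ V₂] [LieRingModule L V₂] [LieModule ℂ L V₂]
    (h : ∀ S : Finset V₂, SimpleOverAnn L V₁ V₂ S)
    (M : LieSubmodule ℂ L (V₁ ⊗[ℂ] V₂)) :
    ∃ V₂' : LieSubmodule ℂ L V₂,
      (M : Submodule ℂ (V₁ ⊗[ℂ] V₂)) =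
        LinearMap.range (TensorProduct.map (LinearMap.id (R := ℂ) (M := V₁))
          (V₂' : Submodule ℂ V₂).subtype) := by
  classical
  haveI hnt : Nontrivial V₁ := (h ∅).1
  -- the annihilator operator sets
  set T : Finset V₂ → Set (Module.End ℂ V₁) :=
    fun S => (LieModule.toEnd ℂ L V₁) '' {g : L | ∀ s ∈ S, ⁅g, s⁆ = (0 : V₂)} with hT
  have hsimpT : ∀ S : Finset V₂, ∀ W : Submodule ℂ V₁,
      (∀ f ∈ T S, ∀ w ∈ W, f w ∈ W) → W = ⊥ ∨ W = ⊤ := by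
    intro S W hW
    refine (h S).2 W ?_
    intro g hg w hw
    have : (LieModule.toEnd ℂ L V₁ g) w ∈ W := hW _ ⟨g, hg, rfl⟩ w hw
    simpa [LieModule.toEnd_apply_apply] using this
  obtain ⟨v₀, hv₀⟩ := exists_ne (0 : V₁)
  -- countable rank of V₁
  have hrank : Module.rank ℂ V₁ ≤ Cardinal.aleph0 := by
    set f : List ι → V₁ := fun l => l.foldr (fun i w => ⁅b i, w⁆) v₀ with hf
    set s : Set V₁ := Set.range f with hs
    have hsp : ∀ g : L, ∀ x ∈ Submodule.span ℂ s, ⁅g, x⁆ ∈ Submodule.span ℂ s := by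
      let P : Submodule ℂ L :=
        { carrier := {g | ∀ x ∈ Submodule.span ℂ s, ⁅g, x⁆ ∈ Submodule.span ℂ s}
          zero_mem' := fun x hx => by rw [zero_lie]; exact Submodule.zero_mem _
          add_mem' := fun {g g'} hg hg' x hx => by
            rw [add_lie]; exact Submodule.add_mem _ (hg x hx) (hg' x hx)
          smul_mem' := fun r g hg x hx => by
            rw [smul_lie]; exact Submodule.smul_mem _ r (hg x hx) }
      have hb : ∀ i, b i ∈ P := by
        intro i x hx
        induction hx using Submodule.span_induction with
        | mem y hy =>
          obtain ⟨l, rfl⟩ := hy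
          exact Submodule.subset_span ⟨i :: l, rfl⟩
        | zero => rw [lie_zero]; exact Submodule.zero_mem _
        | add y z hy hz ihy ihz => rw [lie_add]; exact Submodule.add_mem _ ihy ihz
        | smul r y hy ihy => rw [lie_smul]; exact Submodule.smul_mem _ r ihy
      have hP : P = ⊤ := by
        rw [eq_top_iff, ← b.span_eq, Submodule.span_le]
        rintro _ ⟨i, rfl⟩
        exact hb i
      intro g
      have hg : g ∈ P := hP ▸ Submodule.mem_top
      exact hg
    have htop : Submodule.span ℂ s = ⊤ := by
      rcases (h ∅).2 (Submodule.span ℂ s) (fun g _ w hw => hsp g w hw) with hbot | ht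
      · exfalso
        have hmm : v₀ ∈ Submodule.span ℂ s := Submodule.subset_span ⟨[], rfl⟩
        rw [hbot] at hmm
        exact hv₀ (by simpa using hmm)
      · exact ht
    calc Module.rank ℂ V₁ = Module.rank ℂ (⊤ : Submodule ℂ V₁) := (rank_top ℂ V₁).symm
      _ = Module.rank ℂ (Submodule.span ℂ s) := by rw [htop]
      _ ≤ Cardinal.mk s := rank_span_le s
      _ ≤ Cardinal.mk (List ι) := Cardinal.mk_range_le
      _ ≤ Cardinal.aleph0 := Cardinal.mk_le_aleph0
  -- the candidate Lie submodule of V₂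
  let V₂' : LieSubmodule ℂ L V₂ :=
    { carrier := {w : V₂ | ∀ v : V₁, v ⊗ₜ[ℂ] w ∈ M}
      add_mem' := fun {w w'} hw hw' v => by
        rw [TensorProduct.tmul_add]; exact M.add_mem (hw v) (hw' v)
      zero_mem' := fun v => by rw [TensorProduct.tmul_zero]; exact M.zero_mem
      smul_mem' := fun r w hw v => by
        rw [TensorProduct.tmul_smul]; exact M.smul_mem r (hw v)
      lie_mem := fun {g w} hw v => by
        have h1 : ⁅g, v ⊗ₜ[ℂ] w⁆ ∈ M := M.lie_mem (hw v)
        have h2 : ⁅g, v⁆ ⊗ₜ[ℂ] w ∈ M := hw ⁅g, v⁆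
        have h3 : v ⊗ₜ[ℂ] ⁅g, w⁆ = ⁅g, v ⊗ₜ[ℂ] w⁆ - ⁅g, v⁆ ⊗ₜ[ℂ] w := by
          rw [TensorProduct.LieModule.lie_tmul_right]
          abel
        rw [h3]
        exact M.sub_mem h1 h2 }
  have hmemV₂' : ∀ w : V₂, (∀ v : V₁, v ⊗ₜ[ℂ] w ∈ M) → w ∈ (V₂' : Submodule ℂ V₂) := by
    intro w hw
    exact hw
  refine ⟨V₂', le_antisymm ?_ ?_⟩
  · -- M ≤ range
    intro m hm
    have hmM : m ∈ M := hm
    set ℬ := Module.Basis.ofVectorSpace ℂ V₁ with hℬ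
    obtain ⟨c, hc⟩ := TensorProduct.eq_repr_basis_left (ℬ := ℬ) (x := m)
    have hmem : ∀ i ∈ c.support, ∀ x : V₁, x ⊗ₜ[ℂ] (c i) ∈ M := by
      intro i₀ hi₀ x
      set S : Finset V₂ := c.support.image c with hS
      have key : ∀ p ∈ Algebra.adjoin ℂ (T S),
          ∀ u : Module.Basis.ofVectorSpaceIndex ℂ V₁ → V₁,
          (∑ i ∈ c.support, u i ⊗ₜ[ℂ] c i) ∈ M →
          (∑ i ∈ c.support, p (u i) ⊗ₜ[ℂ] c i) ∈ M := by
        intro p hp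
        induction hp using Algebra.adjoin_induction with
        | mem f hf =>
          intro u hu
          obtain ⟨g, hg, rfl⟩ := hf
          have h1 : ⁅g, ∑ i ∈ c.support, u i ⊗ₜ[ℂ] c i⁆ ∈ M := M.lie_mem hu
          have h2 : ⁅g, ∑ i ∈ c.support, u i ⊗ₜ[ℂ] c i⁆
              = ∑ i ∈ c.support, (LieModule.toEnd ℂ L V₁ g) (u i) ⊗ₜ[ℂ] c i := by
            have hls : ⁅g, ∑ i ∈ c.support, u i ⊗ₜ[ℂ] c i⁆
                = ∑ i ∈ c.support, ⁅g, u i ⊗ₜ[ℂ] c i⁆ :=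
              map_sum (LieModule.toEnd ℂ L (V₁ ⊗[ℂ] V₂) g) _ _
            rw [hls]
            refine Finset.sum_congr rfl fun i hi => ?_
            rw [TensorProduct.LieModule.lie_tmul_right,
              hg (c i) (Finset.mem_image_of_mem c hi), TensorProduct.tmul_zero, add_zero,
              LieModule.toEnd_apply_apply]
          rwa [h2] at h1
        | algebraMap r =>
          intro u hu
          have : (∑ i ∈ c.support, (algebraMap ℂ (Module.End ℂ V₁) r) (u i) ⊗ₜ[ℂ] c i)
              = r • ∑ i ∈ c.support, u i ⊗ₜ[ℂ] c i := by
            rw [Finset.smul_sum]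
            refine Finset.sum_congr rfl fun i hi => ?_
            rw [Module.algebraMap_end_apply, TensorProduct.smul_tmul']
          rw [this]
          exact M.smul_mem r hu
        | add p q hpm hqm ihp ihq =>
          intro u hu
          have : (∑ i ∈ c.support, (p + q) (u i) ⊗ₜ[ℂ] c i)
              = (∑ i ∈ c.support, p (u i) ⊗ₜ[ℂ] c i)
                + ∑ i ∈ c.support, q (u i) ⊗ₜ[ℂ] c i := by
            rw [← Finset.sum_add_distrib]
            refine Finset.sum_congr rfl fun i hi => ?_
            rw [LinearMap.add_apply, TensorProduct.add_tmul]
          rw [this]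
          exact M.add_mem (ihp u hu) (ihq u hu)
        | mul p q hpm hqm ihp ihq =>
          intro u hu
          have := ihp (fun i => q (u i)) (ihq u hu)
          simpa [Module.End.mul_apply] using this
      have hbase : (∑ i ∈ c.support, ℬ i ⊗ₜ[ℂ] c i) ∈ M := by
        have hcs : (c.sum fun i n => ℬ i ⊗ₜ[ℂ] n) = ∑ i ∈ c.support, ℬ i ⊗ₜ[ℂ] c i := rfl
        rw [← hcs, hc]
        exact hmM
      have hLI : LinearIndependent ℂ (fun i : c.support => ℬ i) :=
        ℬ.linearIndependent.comp Subtype.val Subtype.val_injective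
      obtain ⟨p, hpA, hp⟩ := density' hrank (T S) (hsimpT S) c.support (fun i => ℬ i) hLI
        (fun i => if i = i₀ then x else 0)
      have hfin := key p hpA (fun i => ℬ i) hbase
      have heq : (∑ i ∈ c.support, p (ℬ i) ⊗ₜ[ℂ] c i) = x ⊗ₜ[ℂ] c i₀ := by
        rw [Finset.sum_eq_single_of_mem i₀ hi₀ ?_]
        · rw [hp i₀ hi₀]
          simp
        · intro i hi hne
          rw [hp i hi, if_neg hne, TensorProduct.zero_tmul]
      rwa [heq] at hfin
    have hrepr : m = (TensorProduct.map (LinearMap.id (R := ℂ) (M := V₁))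
        (V₂' : Submodule ℂ V₂).subtype)
        (∑ i ∈ c.support.attach,
          ℬ i.1 ⊗ₜ[ℂ] (⟨c i.1, hmemV₂' (c i.1) (hmem i.1 i.2)⟩ : (V₂' : Submodule ℂ V₂))) := by
      rw [map_sum]
      simp only [TensorProduct.map_tmul, LinearMap.id_coe, id_eq, Submodule.coe_subtype]
      rw [Finset.sum_attach c.support (fun i => ℬ i ⊗ₜ[ℂ] c i)]
      exact hc.symm
    rw [hrepr]
    exact LinearMap.mem_range_self _ _
  · -- range ≤ M
    rw [TensorProduct.range_map_eq_span_tmul, Submodule.span_le]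
    rintro _ ⟨v, w, rfl⟩
    simpa using w.2 v
end

section
/- Let L be a Lie algebra over ℂ with countable basis, and V₁, V₂ simple L-modules. If for every finite subset S ⊂ V₂ the module V₁ remains simple as a module over the annihilator ann_L(S), then the tensor product V₁ ⊗ V₂ is a simple L-module. -/
open scoped TensorProduct
open Polynomial Cardinal


section Dixmier
variable {V : Type} [AddCommGroup V] [Module ℂ V]

private lemma aeval_linear_injective (φ : Module.End ℂ V)
    (hinj : ∀ μ : ℂ, Function.Injective (φ - μ • (1 : Module.End ℂ V)))
    {p : ℂ[X]} (hp : p ≠ 0) : Function.Injective (Polynomial.aeval φ p) := by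
  have hsplit := IsAlgClosed.splits p
  have hfac := hsplit.eq_prod_roots
  have hlead : p.leadingCoeff ≠ 0 := Polynomial.leadingCoeff_ne_zero.mpr hp
  have hmul : ∀ m : Multiset ℂ,
      Function.Injective (Polynomial.aeval φ (m.map fun a => X - C a).prod) := by
    intro m
    induction m using Multiset.induction with
    | empty => simp [Function.Injective]
    | cons a m ih =>
      rw [Multiset.map_cons, Multiset.prod_cons, map_mul]
      have h1 : Polynomial.aeval φ (X - C a) = φ - a • 1 := by
        simp [Algebra.algebraMap_eq_smul_one]
      rw [h1, Module.End.mul_eq_comp, LinearMap.coe_comp]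
      exact (hinj a).comp ih
  rw [hfac, map_mul]
  have hc : Polynomial.aeval φ (C p.leadingCoeff) = p.leadingCoeff • 1 := by
    simp [Algebra.algebraMap_eq_smul_one]
  rw [hc]
  intro x y hxy
  simp only [Module.End.mul_apply, LinearMap.smul_apply, Module.End.one_apply] at hxy
  exact hmul _ (smul_right_injective V hlead hxy)

lemma dixmier [Nontrivial V] (hrank : Module.rank ℂ V ≤ ℵ₀)
    (T : Set (Module.End ℂ V))
    (hsimp : ∀ W : Submodule ℂ V, (∀ a ∈ T, ∀ w ∈ W, a w ∈ W) → W = ⊥ ∨ W = ⊤)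
    (φ : Module.End ℂ V) (hφ : ∀ a ∈ T, a * φ = φ * a) :
    ∃ c : ℂ, φ = c • (1 : Module.End ℂ V) := by
  have hcomm : ∀ μ : ℂ, ∀ a ∈ T, a * (φ - μ • 1) = (φ - μ • 1) * a := by
    intro μ a ha
    rw [mul_sub, sub_mul, hφ a ha]
    congr 1
    ext x
    simp [Module.End.mul_apply, map_smul]
  by_cases hker : ∃ μ : ℂ, LinearMap.ker (φ - μ • (1 : Module.End ℂ V)) ≠ ⊥
  · obtain ⟨μ, hμ⟩ := hker
    have hinv : ∀ a ∈ T, ∀ w ∈ LinearMap.ker (φ - μ • (1 : Module.End ℂ V)),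
        a w ∈ LinearMap.ker (φ - μ • (1 : Module.End ℂ V)) := by
      intro a ha w hw
      rw [LinearMap.mem_ker] at hw ⊢
      have := congrArg (fun f : Module.End ℂ V => f w) (hcomm μ a ha)
      simp only [Module.End.mul_apply] at this
      rw [← this, hw, map_zero]
    rcases hsimp _ hinv with h | h
    · exact absurd h hμ
    · refine ⟨μ, ?_⟩
      ext x
      have : x ∈ LinearMap.ker (φ - μ • (1 : Module.End ℂ V)) := h ▸ Submodule.mem_top
      rw [LinearMap.mem_ker] at this
      simp only [LinearMap.sub_apply, LinearMap.smul_apply, Module.End.one_apply,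
        sub_eq_zero] at this
      simpa using this
  · push_neg at hker
    exfalso
    have hinj : ∀ μ : ℂ, Function.Injective (φ - μ • (1 : Module.End ℂ V)) := fun μ =>
      LinearMap.ker_eq_bot.mp (hker μ)
    have hsurj : ∀ μ : ℂ, Function.Surjective (φ - μ • (1 : Module.End ℂ V)) := by
      intro μ
      have hinvr : ∀ a ∈ T, ∀ w ∈ LinearMap.range (φ - μ • (1 : Module.End ℂ V)),
          a w ∈ LinearMap.range (φ - μ • (1 : Module.End ℂ V)) := by
        rintro a ha w ⟨x, rfl⟩
        refine ⟨a x, ?_⟩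
        have := congrArg (fun f : Module.End ℂ V => f x) (hcomm μ a ha)
        simpa only [Module.End.mul_apply] using this.symm
      rcases hsimp _ hinvr with h | h
      · obtain ⟨x, hx⟩ := exists_ne (0 : V)
        exfalso
        have : (φ - μ • 1) x ∈ (⊥ : Submodule ℂ V) := h ▸ LinearMap.mem_range_self _ x
        rw [Submodule.mem_bot] at this
        exact hx (hinj μ (by simpa using this))
      · exact LinearMap.range_eq_top.mp h
    set ψ : ℂ → (V ≃ₗ[ℂ] V) := fun μ =>
      LinearEquiv.ofBijective (φ - μ • (1 : Module.End ℂ V)) ⟨hinj μ, hsurj μ⟩ with hψ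
    obtain ⟨v, hv⟩ := exists_ne (0 : V)
    set F : ℂ → V := fun μ => (ψ μ).symm v with hF
    have hFv : ∀ μ, (φ - μ • (1 : Module.End ℂ V)) (F μ) = v := by
      intro μ
      exact (ψ μ).apply_symm_apply v
    have hli : LinearIndependent ℂ F := by
      rw [linearIndependent_iff']
      intro s g hsum i₀ hi₀
      set Q : ℂ[X] := ∑ μ ∈ s, C (g μ) * ∏ ν ∈ s.erase μ, (X - C ν) with hQ
      have hQv : (Polynomial.aeval φ Q) v = 0 := by
        have key : ∀ μ ∈ s,
            (Polynomial.aeval φ (∏ ν ∈ s, (X - C ν))) (F μ)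
              = (Polynomial.aeval φ (∏ ν ∈ s.erase μ, (X - C ν))) v := by
          intro μ hμ
          rw [← Finset.prod_erase_mul s _ hμ, map_mul]
          have h1 : Polynomial.aeval φ (X - C μ) = φ - μ • 1 := by
            simp [Algebra.algebraMap_eq_smul_one]
          rw [h1, Module.End.mul_apply, hFv μ]
        calc (Polynomial.aeval φ Q) v
            = ∑ μ ∈ s, g μ • (Polynomial.aeval φ (∏ ν ∈ s.erase μ, (X - C ν))) v := by
              rw [hQ, map_sum, LinearMap.sum_apply]
              refine Finset.sum_congr rfl fun μ _ => ?_
              rw [map_mul, Polynomial.aeval_C, Algebra.algebraMap_eq_smul_one]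
              simp
          _ = ∑ μ ∈ s, g μ • (Polynomial.aeval φ (∏ ν ∈ s, (X - C ν))) (F μ) := by
              refine Finset.sum_congr rfl fun μ hμ => ?_
              rw [key μ hμ]
          _ = (Polynomial.aeval φ (∏ ν ∈ s, (X - C ν))) (∑ μ ∈ s, g μ • F μ) := by
              rw [map_sum]
              refine Finset.sum_congr rfl fun μ _ => ?_
              rw [map_smul]
          _ = 0 := by rw [hsum, map_zero]
      have hQ0 : Q = 0 := by
        by_contra hne
        exact hv (aeval_linear_injective φ hinj hne (by simpa using hQv))
      have := congrArg (Polynomial.eval i₀) hQ0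
      rw [hQ] at this
      simp only [Polynomial.eval_finset_sum, Polynomial.eval_mul, Polynomial.eval_C,
        Polynomial.eval_prod, Polynomial.eval_sub, Polynomial.eval_X, Polynomial.eval_zero] at this
      rw [Finset.sum_eq_single i₀ (fun μ hμ hne => ?_) (fun habs => absurd hi₀ habs)] at this
      · have hprod : (∏ ν ∈ s.erase i₀, (i₀ - ν)) ≠ 0 := by
          rw [Finset.prod_ne_zero_iff]
          intro ν hν
          have := Finset.ne_of_mem_erase hν
          exact sub_ne_zero.mpr (Ne.symm this)
        exact (mul_eq_zero.mp this).resolve_right hprod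
      · have : i₀ ∈ s.erase μ := Finset.mem_erase.mpr ⟨fun h => hne h.symm, hi₀⟩
        rw [Finset.prod_eq_zero this (by ring)]
        ring
    have hcard : #ℂ ≤ Module.rank ℂ V := hli.cardinal_le_rank
    rw [mk_complex] at hcard
    exact (aleph0_lt_continuum.not_ge) (hcard.trans hrank)

end Dixmier


-- rank of a simple Lie module over a countably-based Lie algebra
lemma rank_le_aleph0_of_simple (L : Type) [LieRing L] [LieAlgebra ℂ L]
    (ι : Type) [Countable ι] (b : Module.Basis ι ℂ L)
    (V : Type) [AddCommGroup V] [Module ℂ V] [LieRingModule L V] [LieModule ℂ L V]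
    [IsSimpleOrder (LieSubmodule ℂ L V)] [Nontrivial V] :
    Module.rank ℂ V ≤ ℵ₀ := by
  obtain ⟨v₀, hv₀⟩ := exists_ne (0 : V)
  set f : List ι → V := fun lw => lw.foldr (fun i x => ⁅b i, x⁆) v₀ with hf
  set M : Submodule ℂ V := Submodule.span ℂ (Set.range f) with hM
  have hmem : v₀ ∈ M := Submodule.subset_span ⟨[], rfl⟩
  have hbrk : ∀ g : L, ∀ m ∈ M, ⁅g, m⁆ ∈ M := by
    have hN : ∀ i : ι, ∀ m ∈ M, ⁅b i, m⁆ ∈ M := by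
      intro i m hm
      induction hm using Submodule.span_induction with
      | mem x hx =>
        obtain ⟨lw, rfl⟩ := hx
        exact Submodule.subset_span ⟨i :: lw, rfl⟩
      | zero => simp
      | add x y _ _ hx hy => rw [lie_add]; exact M.add_mem hx hy
      | smul c x _ hx => rw [lie_smul]; exact M.smul_mem c hx
    set N : Submodule ℂ L :=
      { carrier := {g : L | ∀ m ∈ M, ⁅g, m⁆ ∈ M}
        add_mem' := by
          intro x y hx hy m hm
          rw [add_lie]; exact M.add_mem (hx m hm) (hy m hm)
        zero_mem' := by intro m hm; rw [zero_lie]; exact M.zero_mem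
        smul_mem' := by
          intro c x hx m hm
          rw [smul_lie]; exact M.smul_mem c (hx m hm) } with hNdef
    have : (⊤ : Submodule ℂ L) ≤ N := by
      rw [← b.span_eq]
      rw [Submodule.span_le]
      rintro x ⟨i, rfl⟩
      exact hN i
    exact fun g => this Submodule.mem_top
  set Mlie : LieSubmodule ℂ L V :=
    { toSubmodule := M, lie_mem := fun {x m} hm => hbrk x m hm } with hMlie
  have hne : Mlie ≠ ⊥ := by
    intro hbot
    rw [LieSubmodule.eq_bot_iff] at hbot
    exact hv₀ (hbot v₀ hmem)
  have htop : Mlie = ⊤ := (IsSimpleOrder.eq_bot_or_eq_top Mlie).resolve_left hne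
  have hMtop : M = ⊤ := by
    have := congrArg (fun N : LieSubmodule ℂ L V => (N : Submodule ℂ V)) htop
    simpa [hMlie] using this
  have h1 : Module.rank ℂ V = Module.rank ℂ M := by
    rw [hMtop]
    exact (rank_top ℂ V).symm
  have h2 : Module.rank ℂ M ≤ #(Set.range f) := by rw [hM]; exact rank_span_le _
  have h3 : #(Set.range f) ≤ ℵ₀ := (Set.countable_range f).le_aleph0
  rw [h1]; exact h2.trans h3


section TensorAux
variable {V₁ V₂ : Type} [AddCommGroup V₁] [Module ℂ V₁] [AddCommGroup V₂] [Module ℂ V₂]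

/-- coordinate functional dual to an independent family -/
lemma exists_dual_family {n : ℕ} {w : Fin n → V₂} (hw : LinearIndependent ℂ w) (i : Fin n) :
    ∃ ψ : V₂ →ₗ[ℂ] ℂ, ∀ j, ψ (w j) = if i = j then 1 else 0 := by
  set W := Submodule.span ℂ (Set.range w) with hW
  obtain ⟨W', hcompl⟩ := Submodule.exists_isCompl W
  set π : V₂ →ₗ[ℂ] W := W.linearProjOfIsCompl W' hcompl with hπ
  refine ⟨(Finsupp.lapply i).comp ((hw.repr : W →ₗ[ℂ] (Fin n →₀ ℂ)).comp π), fun j => ?_⟩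
  have h1 : π (w j) = ⟨w j, Submodule.subset_span ⟨j, rfl⟩⟩ :=
    Submodule.linearProjOfIsCompl_apply_left hcompl ⟨w j, Submodule.subset_span ⟨j, rfl⟩⟩
  have h2 : hw.repr ⟨w j, Submodule.subset_span ⟨j, rfl⟩⟩ = Finsupp.single j 1 := by
    have := hw.repr_eq_single j ⟨w j, Submodule.subset_span ⟨j, rfl⟩⟩ rfl
    exact this
  simp only [LinearMap.comp_apply, h1, h2, Finsupp.lapply_apply]
  rw [Finsupp.single_apply]
  simp [eq_comm]

/-- extract coefficients: if a sum of tensors with independent right factors vanishes,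
all left factors vanish -/
lemma left_vanish_of_sum_tmul_eq_zero {n : ℕ} {v : Fin n → V₁} {w : Fin n → V₂}
    (hw : LinearIndependent ℂ w) (h : ∑ j, v j ⊗ₜ[ℂ] w j = 0) : ∀ i, v i = 0 := by
  intro i
  obtain ⟨ψ, hψ⟩ := exists_dual_family hw i
  set Φ : V₁ ⊗[ℂ] V₂ →ₗ[ℂ] V₁ :=
    (TensorProduct.rid ℂ V₁).toLinearMap.comp (LinearMap.lTensor V₁ ψ) with hΦ
  have hΦt : ∀ (x : V₁) (y : V₂), Φ (x ⊗ₜ y) = ψ y • x := by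
    intro x y; simp [hΦ]
  have := congrArg Φ h
  rw [map_sum, map_zero] at this
  simp only [hΦt, hψ] at this
  rw [Finset.sum_eq_single i (fun j _ hne => by rw [if_neg (fun hh => hne hh.symm), zero_smul])
    (fun habs => absurd (Finset.mem_univ i) habs)] at this
  simpa using this

lemma tmul_ne_zero {x : V₁} {y : V₂} (hx : x ≠ 0) (hy : y ≠ 0) : x ⊗ₜ[ℂ] y ≠ 0 := by
  intro h
  have hw : LinearIndependent ℂ (fun _ : Fin 1 => y) :=
    linearIndependent_unique_iff.mpr hy
  have h0 : ∑ j : Fin 1, (fun _ : Fin 1 => x) j ⊗ₜ[ℂ] (fun _ : Fin 1 => y) j = 0 := by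
    simpa using h
  exact hx (left_vanish_of_sum_tmul_eq_zero hw h0 0)

/-- every tensor has a representation with linearly independent right factors -/
lemma exists_tensor_repr (t : V₁ ⊗[ℂ] V₂) :
    ∃ (n : ℕ) (v : Fin n → V₁) (w : Fin n → V₂),
      LinearIndependent ℂ w ∧ t = ∑ i, v i ⊗ₜ[ℂ] w i := by
  obtain ⟨S, rfl⟩ := TensorProduct.exists_finset t
  set W := Submodule.span ℂ (Prod.snd '' (S : Set (V₁ × V₂))) with hWdef
  have : Module.Finite ℂ W := by
    apply FiniteDimensional.span_of_finite
    exact (S.finite_toSet.image _)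
  set n := Module.finrank ℂ W with hn
  set w' : Module.Basis (Fin n) ℂ W := Module.finBasis ℂ W with hw'
  set w : Fin n → V₂ := fun i => (w' i : V₂) with hw
  have hwli : LinearIndependent ℂ w :=
    w'.linearIndependent.map' W.subtype (Submodule.ker_subtype W)
  have hmem : ∀ p ∈ S, (p : V₁ × V₂).2 ∈ W := fun p hp =>
    Submodule.subset_span ⟨p, hp, rfl⟩
  refine ⟨n, fun i => ∑ p ∈ S.attach, (w'.repr ⟨p.1.2, hmem p.1 p.2⟩ i) • p.1.1, w, hwli, ?_⟩
  rw [← Finset.sum_attach S (fun p => p.1 ⊗ₜ[ℂ] p.2)]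
  have hexp : ∀ p : {x // x ∈ S}, (p.1.1 ⊗ₜ[ℂ] p.1.2)
      = ∑ i, (w'.repr ⟨p.1.2, hmem p.1 p.2⟩ i) • (p.1.1 ⊗ₜ[ℂ] w i) := by
    intro p
    have hy : (p.1.2 : V₂) = ∑ i, (w'.repr ⟨p.1.2, hmem p.1 p.2⟩ i) • w i := by
      have h2 := congrArg (W.subtype) (w'.sum_repr ⟨p.1.2, hmem p.1 p.2⟩)
      simp only [map_sum, map_smul, Submodule.subtype_apply, Submodule.coe_mk] at h2
      exact h2.symm
    conv_lhs => rw [hy]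
    rw [TensorProduct.tmul_sum]
    refine Finset.sum_congr rfl fun i _ => ?_
    rw [TensorProduct.tmul_smul]
  calc ∑ p ∈ S.attach, (p.1.1 ⊗ₜ[ℂ] p.1.2)
      = ∑ p ∈ S.attach, ∑ i, (w'.repr ⟨p.1.2, hmem p.1 p.2⟩ i) • (p.1.1 ⊗ₜ[ℂ] w i) := by
        exact Finset.sum_congr rfl fun p _ => hexp p
    _ = ∑ i, ∑ p ∈ S.attach, (w'.repr ⟨p.1.2, hmem p.1 p.2⟩ i) • (p.1.1 ⊗ₜ[ℂ] w i) :=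
        Finset.sum_comm
    _ = ∑ i, (∑ p ∈ S.attach, (w'.repr ⟨p.1.2, hmem p.1 p.2⟩ i) • p.1.1) ⊗ₜ[ℂ] w i := by
        refine Finset.sum_congr rfl fun i _ => ?_
        rw [TensorProduct.sum_tmul]
        refine Finset.sum_congr rfl fun p _ => ?_
        rw [TensorProduct.smul_tmul']

end TensorAux


theorem stmt3 (L : Type) [LieRing L] [LieAlgebra ℂ L]
    (ι : Type) [Countable ι] (b : Module.Basis ι ℂ L)
    (V₁ : Type) [AddCommGroup V₁] [Module ℂ V₁] [LieRingModule L V₁] [LieModule ℂ L V₁]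
    (V₂ : Type) [AddCommGroup V₂] [Module ℂ V₂] [LieRingModule L V₂] [LieModule ℂ L V₂]
    [IsSimpleOrder (LieSubmodule ℂ L V₁)] [IsSimpleOrder (LieSubmodule ℂ L V₂)]
    (h : ∀ S : Finset V₂, SimpleOverAnn L V₁ V₂ S) :
    IsSimpleOrder (LieSubmodule ℂ L (V₁ ⊗[ℂ] V₂)) := by
  classical
  haveI hnt1 : Nontrivial V₁ := (h ∅).1
  haveI hnt2 : Nontrivial V₂ := (LieSubmodule.nontrivial_iff ℂ L V₂).mp inferInstance
  have hrank : Module.rank ℂ V₁ ≤ Cardinal.aleph0 := rank_le_aleph0_of_simple L ι b V₁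
  obtain ⟨x₁, hx₁⟩ := exists_ne (0 : V₁)
  obtain ⟨y₁, hy₁⟩ := exists_ne (0 : V₂)
  haveI : Nontrivial (V₁ ⊗[ℂ] V₂) := ⟨⟨x₁ ⊗ₜ y₁, 0, tmul_ne_zero hx₁ hy₁⟩⟩
  haveI : Nontrivial (LieSubmodule ℂ L (V₁ ⊗[ℂ] V₂)) :=
    (LieSubmodule.nontrivial_iff ℂ L _).mpr this
  -- a helper: bracket commutes with finite sums
  have lie_sum' : ∀ (g : L) (k : ℕ) (f : Fin k → V₁ ⊗[ℂ] V₂),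
      ⁅g, ∑ i, f i⁆ = ∑ i, ⁅g, f i⁆ := by
    intro g k f
    have := map_sum (LieModule.toEnd ℂ L (V₁ ⊗[ℂ] V₂) g) f Finset.univ
    simpa only [LieModule.toEnd_apply_apply] using this
  refine ⟨fun U => ?_⟩
  by_cases hU : U = ⊥
  · exact Or.inl hU
  right
  -- a nonzero element of U
  have hex : ∃ t, t ∈ U ∧ t ≠ 0 := by
    by_contra hc
    push_neg at hc
    exact hU (LieSubmodule.eq_bot_iff U |>.mpr fun m hm => hc m hm)
  obtain ⟨t, htU0, htne0⟩ := hex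
  -- minimal length of a nonzero element of U written with independent right factors
  set A : ℕ → Prop := fun k => ∃ (v : Fin k → V₁) (w : Fin k → V₂),
    LinearIndependent ℂ w ∧ (∑ i, v i ⊗ₜ[ℂ] w i) ∈ U ∧ (∑ i, v i ⊗ₜ[ℂ] w i) ≠ 0 with hA
  have hAex : ∃ k, A k := by
    obtain ⟨k, v, w, hw, hrep⟩ := exists_tensor_repr t
    exact ⟨k, v, w, hw, hrep ▸ htU0, hrep ▸ htne0⟩
  obtain ⟨n, hAn, hmin⟩ : ∃ n, A n ∧ ∀ k, k < n → ¬ A k :=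
    ⟨Nat.find hAex, Nat.find_spec hAex, fun k hk => Nat.find_min hAex hk⟩
  obtain ⟨v, w, hw, htU, htne⟩ := hAn
  have hn0 : n ≠ 0 := by
    intro h0
    apply htne
    rw [show (Finset.univ : Finset (Fin n)) = ∅ by
      rw [h0] at *; exact Finset.univ_eq_empty]
    exact Finset.sum_empty
  obtain ⟨m, rfl⟩ : ∃ m, n = m + 1 := Nat.exists_eq_succ_of_ne_zero hn0
  -- the finite set S and its annihilator condition
  set S : Finset V₂ := Finset.image w Finset.univ with hS
  have hannw : ∀ g : L, (∀ s ∈ S, ⁅g, s⁆ = (0 : V₂)) → ∀ i, ⁅g, w i⁆ = 0 :=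
    fun g hg i => hg _ (Finset.mem_image_of_mem w (Finset.mem_univ i))
  -- the submodule of coefficient tuples
  set Ubar : Submodule ℂ (Fin (m + 1) → V₁) :=
    { carrier := {p | (∑ i, p i ⊗ₜ[ℂ] w i) ∈ U}
      add_mem' := by
        intro p q hp hq
        have : (∑ i, (p + q) i ⊗ₜ[ℂ] w i)
            = (∑ i, p i ⊗ₜ[ℂ] w i) + ∑ i, q i ⊗ₜ[ℂ] w i := by
          rw [← Finset.sum_add_distrib]
          exact Finset.sum_congr rfl fun i _ => TensorProduct.add_tmul _ _ _
        simpa only [Set.mem_setOf_eq, this, LieSubmodule.mem_toSubmodule] using U.add_mem hp hq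
      zero_mem' := by
        have : (∑ i : Fin (m + 1), (0 : V₁) ⊗ₜ[ℂ] w i) = 0 := by
          simp [TensorProduct.zero_tmul]
        simpa only [Set.mem_setOf_eq, Pi.zero_apply, this] using U.zero_mem
      smul_mem' := by
        intro c p hp
        have : (∑ i, (c • p) i ⊗ₜ[ℂ] w i) = c • ∑ i, p i ⊗ₜ[ℂ] w i := by
          rw [Finset.smul_sum]
          exact Finset.sum_congr rfl fun i _ => by
            rw [Pi.smul_apply, TensorProduct.smul_tmul']
        simpa only [Set.mem_setOf_eq, this, LieSubmodule.mem_toSubmodule] using U.smul_mem c hp } with hUbar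
  have hUbar_mem : ∀ p : Fin (m + 1) → V₁, p ∈ Ubar ↔ (∑ i, p i ⊗ₜ[ℂ] w i) ∈ U :=
    fun p => Iff.rfl
  -- stability of Ubar under the annihilator of S
  have hUbar_lie : ∀ g : L, (∀ s ∈ S, ⁅g, s⁆ = (0 : V₂)) →
      ∀ p ∈ Ubar, (fun i => ⁅g, p i⁆) ∈ Ubar := by
    intro g hg p hp
    rw [hUbar_mem] at hp ⊢
    have hkey : (∑ i, ⁅g, p i⁆ ⊗ₜ[ℂ] w i) = ⁅g, ∑ i, p i ⊗ₜ[ℂ] w i⁆ := by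
      rw [lie_sum' g]
      refine Finset.sum_congr rfl fun i _ => ?_
      rw [TensorProduct.LieModule.lie_tmul_right, hannw g hg i, TensorProduct.tmul_zero, add_zero]
    rw [hkey]
    exact U.lie_mem hp
  -- the key minimality property
  have keyA : ∀ p ∈ Ubar, p 0 = 0 → p = 0 := by
    intro p hp hp0
    rw [hUbar_mem] at hp
    have hrep : (∑ i, p i ⊗ₜ[ℂ] w i) = ∑ i : Fin m, p i.succ ⊗ₜ[ℂ] w i.succ := by
      rw [Fin.sum_univ_succ, hp0, TensorProduct.zero_tmul, zero_add]
    have hzero : (∑ i, p i ⊗ₜ[ℂ] w i) = 0 := by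
      by_contra hne
      refine hmin m (Nat.lt_succ_self m) ?_
      exact ⟨fun i => p i.succ, fun i => w i.succ,
        hw.comp Fin.succ (Fin.succ_injective m), hrep ▸ hp, hrep ▸ hne⟩
    have hvan : ∀ i : Fin m, p i.succ = 0 :=
      left_vanish_of_sum_tmul_eq_zero (hw.comp Fin.succ (Fin.succ_injective m))
        (hrep ▸ hzero)
    funext i
    refine Fin.cases ?_ ?_ i
    · exact hp0
    · exact hvan
  have hv0 : v 0 ≠ 0 := by
    intro h0
    exact htne (by rw [show v = 0 from keyA v htU h0]; simp [TensorProduct.zero_tmul])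
  -- surjectivity of the 0-th projection from Ubar
  have hsurj0 : ∀ x : V₁, ∃ p ∈ Ubar, p 0 = x := by
    set W₀ : Submodule ℂ V₁ := Ubar.map (LinearMap.proj 0) with hW₀
    have hinv : ∀ g : L, (∀ s ∈ S, ⁅g, s⁆ = (0 : V₂)) → ∀ x ∈ W₀, ⁅g, x⁆ ∈ W₀ := by
      rintro g hg x ⟨p, hp, rfl⟩
      exact ⟨fun i => ⁅g, p i⁆, hUbar_lie g hg p hp, rfl⟩
    rcases (h S).2 W₀ hinv with hbot | htop
    · exfalso
      apply hv0
      have : v 0 ∈ W₀ := ⟨v, htU, rfl⟩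
      rw [hbot] at this
      simpa using this
    · intro x
      have : x ∈ W₀ := htop ▸ Submodule.mem_top
      obtain ⟨p, hp, hpx⟩ := this
      exact ⟨p, hp, hpx⟩
  -- the linear equivalence Ubar ≃ V₁ given by the 0-th projection
  set π₀ : Ubar →ₗ[ℂ] V₁ := (LinearMap.proj 0).comp Ubar.subtype with hπ₀
  have hπ₀app : ∀ p : Ubar, π₀ p = p.1 0 := fun p => rfl
  have hbij : Function.Bijective π₀ := by
    constructor
    · intro a c hac
      have hsub : (a.1 - c.1) ∈ Ubar := Ubar.sub_mem a.2 c.2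
      have h0 : (a.1 - c.1) 0 = 0 := by
        rw [Pi.sub_apply]
        rw [hπ₀app, hπ₀app] at hac
        rw [hac, sub_self]
      have := keyA _ hsub h0
      exact Subtype.ext (sub_eq_zero.mp this)
    · intro x
      obtain ⟨p, hp, hpx⟩ := hsurj0 x
      exact ⟨⟨p, hp⟩, hpx⟩
  set e : Ubar ≃ₗ[ℂ] V₁ := LinearEquiv.ofBijective π₀ hbij with he
  have heapp : ∀ p : Ubar, e p = p.1 0 := fun p => rfl
  -- the intertwining endomorphisms
  set φ : Fin (m + 1) → Module.End ℂ V₁ :=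
    fun i => ((LinearMap.proj i).comp Ubar.subtype).comp e.symm.toLinearMap with hφ
  have hφapp : ∀ (i : Fin (m + 1)) (x : V₁), φ i x = (e.symm x).1 i := fun i x => rfl
  -- the set of annihilator operators
  set T : Set (Module.End ℂ V₁) :=
    {a | ∃ g : L, (∀ s ∈ S, ⁅g, s⁆ = (0 : V₂)) ∧ ∀ x : V₁, a x = ⁅g, x⁆} with hT
  have hTsimp : ∀ W : Submodule ℂ V₁, (∀ a ∈ T, ∀ x ∈ W, a x ∈ W) → W = ⊥ ∨ W = ⊤ := by
    intro W hW
    refine (h S).2 W fun g hg x hx => ?_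
    have ha : (LieModule.toEnd ℂ L V₁ g : Module.End ℂ V₁) ∈ T :=
      ⟨g, hg, fun x => LieModule.toEnd_apply_apply ℂ L V₁ g x⟩
    have := hW _ ha x hx
    rwa [LieModule.toEnd_apply_apply] at this
  have hφcomm : ∀ i : Fin (m + 1), ∀ a ∈ T, a * φ i = φ i * a := by
    rintro i a ⟨g, hg, hag⟩
    ext x
    rw [Module.End.mul_apply, Module.End.mul_apply]
    set p : Ubar := e.symm x with hp
    have hq : (fun j => ⁅g, p.1 j⁆) ∈ Ubar := hUbar_lie g hg p.1 p.2
    have hp0 : p.1 0 = x := by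
      have := e.apply_symm_apply x
      rw [← this, heapp]
    have hqe : e ⟨fun j => ⁅g, p.1 j⁆, hq⟩ = ⁅g, x⁆ := by
      rw [heapp]
      simp only []
      rw [hp0]
    have hsymm : e.symm ⁅g, x⁆ = ⟨fun j => ⁅g, p.1 j⁆, hq⟩ :=
      e.symm_apply_eq.mpr hqe.symm
    rw [hag, hag, hφapp, hφapp, hsymm]
  -- Dixmier's lemma applied to each φ i
  have hscal : ∀ i : Fin (m + 1), ∃ c : ℂ, φ i = c • (1 : Module.End ℂ V₁) :=
    fun i => dixmier hrank T hTsimp (φ i) (hφcomm i)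
  choose c hc using hscal
  -- conclude that t is a pure tensor
  have hvsymm : e.symm (v 0) = ⟨v, htU⟩ := by
    refine e.symm_apply_eq.mpr ?_
    rw [heapp]
  have hvi : ∀ i, v i = c i • v 0 := by
    intro i
    have h1 : φ i (v 0) = v i := by rw [hφapp, hvsymm]
    rw [← h1, hc i]
    simp
  set ws : V₂ := ∑ i, c i • w i with hws
  have htw : (∑ i, v i ⊗ₜ[ℂ] w i) = v 0 ⊗ₜ[ℂ] ws := by
    rw [hws, TensorProduct.tmul_sum]
    refine Finset.sum_congr rfl fun i _ => ?_
    rw [hvi i, TensorProduct.smul_tmul]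
  have hws0 : ws ≠ 0 := by
    intro h0
    apply htne
    rw [htw, h0, TensorProduct.tmul_zero]
  -- V₁ ⊗ ws ⊆ U
  have hall1 : ∀ x : V₁, x ⊗ₜ[ℂ] ws ∈ U := by
    set W₁ : Submodule ℂ V₁ :=
      { carrier := {x | x ⊗ₜ[ℂ] ws ∈ U}
        add_mem' := by
          intro x y hx hy
          simpa only [Set.mem_setOf_eq, TensorProduct.add_tmul, LieSubmodule.mem_toSubmodule] using U.add_mem hx hy
        zero_mem' := by
          simpa only [Set.mem_setOf_eq, TensorProduct.zero_tmul] using U.zero_mem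
        smul_mem' := by
          intro a x hx
          simpa only [Set.mem_setOf_eq, TensorProduct.smul_tmul', LieSubmodule.mem_toSubmodule] using U.smul_mem a hx } with hW₁
    have hinv : ∀ g : L, (∀ s ∈ ({ws} : Finset V₂), ⁅g, s⁆ = (0 : V₂)) →
        ∀ x ∈ W₁, ⁅g, x⁆ ∈ W₁ := by
      intro g hg x hx
      have hgws : ⁅g, ws⁆ = 0 := hg ws (Finset.mem_singleton_self ws)
      have : ⁅g, x ⊗ₜ[ℂ] ws⁆ = ⁅g, x⁆ ⊗ₜ[ℂ] ws := by
        rw [TensorProduct.LieModule.lie_tmul_right, hgws, TensorProduct.tmul_zero, add_zero]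
      show ⁅g, x⁆ ⊗ₜ[ℂ] ws ∈ U
      rw [← this]
      exact U.lie_mem hx
    rcases (h {ws}).2 W₁ hinv with hbot | htop
    · exfalso
      apply hv0
      have : v 0 ∈ W₁ := by
        show v 0 ⊗ₜ[ℂ] ws ∈ U
        rw [← htw]
        exact htU
      rw [hbot] at this
      simpa using this
    · intro x
      have : x ∈ W₁ := htop ▸ Submodule.mem_top
      exact this
  -- all pure tensors are in U
  have hall : ∀ (y : V₂) (x : V₁), x ⊗ₜ[ℂ] y ∈ U := by
    set W₂ : LieSubmodule ℂ L V₂ :=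
      { carrier := {y | ∀ x : V₁, x ⊗ₜ[ℂ] y ∈ U}
        add_mem' := by
          intro y z hy hz x
          simpa only [TensorProduct.tmul_add, LieSubmodule.mem_toSubmodule] using U.add_mem (hy x) (hz x)
        zero_mem' := by
          intro x
          simpa only [TensorProduct.tmul_zero] using U.zero_mem
        smul_mem' := by
          intro a y hy x
          simpa only [TensorProduct.tmul_smul, LieSubmodule.mem_toSubmodule] using U.smul_mem a (hy x)
        lie_mem := by
          intro g y hy x
          have h1 : ⁅g, x ⊗ₜ[ℂ] y⁆ ∈ U := U.lie_mem (hy x)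
          have h2 : ⁅g, x⁆ ⊗ₜ[ℂ] y ∈ U := hy ⁅g, x⁆
          have h3 : x ⊗ₜ[ℂ] ⁅g, y⁆ = ⁅g, x ⊗ₜ[ℂ] y⁆ - ⁅g, x⁆ ⊗ₜ[ℂ] y := by
            rw [TensorProduct.LieModule.lie_tmul_right]
            abel
          show x ⊗ₜ[ℂ] ⁅g, y⁆ ∈ U
          rw [h3]
          exact U.sub_mem h1 h2 } with hW₂
    have hmem : ∀ y : V₂, y ∈ W₂ ↔ ∀ x : V₁, x ⊗ₜ[ℂ] y ∈ U := fun y => Iff.rfl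
    have hne : W₂ ≠ ⊥ := by
      intro hbot
      rw [LieSubmodule.eq_bot_iff] at hbot
      exact hws0 (hbot ws ((hmem ws).mpr hall1))
    have htop : W₂ = ⊤ := (IsSimpleOrder.eq_bot_or_eq_top W₂).resolve_left hne
    intro y x
    have : y ∈ W₂ := htop ▸ LieSubmodule.mem_top y
    exact (hmem y).mp this x
  -- conclude U = ⊤
  rw [← LieSubmodule.toSubmodule_eq_top]
  rw [← top_le_iff, ← TensorProduct.span_tmul_eq_top ℂ V₁ V₂, Submodule.span_le]
  rintro z ⟨x, y, rfl⟩
  exact hall y x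
end

section
/- Let L be a Lie algebra over ℂ with countable basis, V₁ a simple L-module and V₂ an L-module. Suppose ann_L(v) + ann_L(S) = L for every v ∈ V₁ and every finite subset S ⊂ V₂. Then for every finite subset S ⊂ V₂, V₁ is simple as an ann_L(S)-module. -/
theorem stmt4 (L : Type) [LieRing L] [LieAlgebra ℂ L]
    (ι : Type) [Countable ι] (b : Module.Basis ι ℂ L)
    (V₁ : Type) [AddCommGroup V₁] [Module ℂ V₁] [LieRingModule L V₁] [LieModule ℂ L V₁]
    (V₂ : Type) [AddCommGroup V₂] [Module ℂ V₂] [LieRingModule L V₂] [LieModule ℂ L V₂]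
    [IsSimpleOrder (LieSubmodule ℂ L V₁)]
    -- `ann_L(v) + ann_L(S) = L` for every `v ∈ V₁` and every finite `S ⊆ V₂`:
    (h : ∀ (v : V₁) (S : Finset V₂) (x : L), ∃ y z : L, x = y + z ∧
      ⁅y, v⁆ = (0 : V₁) ∧ ∀ s ∈ S, ⁅z, s⁆ = (0 : V₂)) :
    ∀ S : Finset V₂, SimpleOverAnn L V₁ V₂ S := by
  intro S
  constructor
  · -- Nontrivial V₁
    by_contra hnt
    have hall : ∀ v : V₁, v = 0 := by
      intro v
      by_contra hv
      exact hnt ⟨v, 0, hv⟩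
    have : (⊥ : LieSubmodule ℂ L V₁) = ⊤ := by
      ext x
      simp [hall x]
    exact (IsSimpleOrder.bot_ne_top (α := LieSubmodule ℂ L V₁)) this
  · intro W hW
    -- W is invariant under all of L
    have hLie : ∀ (x : L) (w : V₁), w ∈ W → ⁅x, w⁆ ∈ W := by
      intro x w hw
      obtain ⟨y, z, hxyz, hy, hz⟩ := h w S x
      have : ⁅x, w⁆ = ⁅z, w⁆ := by
        rw [hxyz, add_lie, hy, zero_add]
      rw [this]
      exact hW z hz w hw
    let W' : LieSubmodule ℂ L V₁ :=
      { toSubmodule := W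
        lie_mem := fun {x w} hw => hLie x w hw }
    rcases (IsSimpleOrder.eq_bot_or_eq_top W') with h' | h'
    · left
      have := congrArg (fun M : LieSubmodule ℂ L V₁ => (M : Submodule ℂ V₁)) h'
      exact this
    · right
      have := congrArg (fun M : LieSubmodule ℂ L V₁ => (M : Submodule ℂ V₁)) h'
      exact this
end
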